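/- Let G be a finite simple graph with positive edge weights w, let M be a matching in G, and let k ≥ 1. Let aug(M,k) be a set of pairwise vertex-disjoint (M,[1,k])-augmenting paths of maximum total gain, and let aug^{ig}(M,k) be an index-greedy set of augmenting paths, i.e. a maximal independent set in the intersection graph I(M) obtained by processing the (M,[1,k])-augmenting paths in nonincreasing order of gain-index γ_M(p) = ⌈log₂ gain_M(p)⌉ and adding each path iff it is vertex-disjoint from all previously added paths. Then gain(aug^{ig}(M,k)) ≥ (1/(2(k+1))) · gain(aug(M,k)). -/

import Mathlib

/-- The set of vertices covered by a finite set `M` of edges. -/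
def coveredVerts {V : Type*} (M : Finset (Sym2 V)) : Set V := {x : V | ∃ e ∈ M, x ∈ e}

/-- `M` is a matching in `G`: a finite set of edges of `G` that are pairwise
non-adjacent. -/
def IsMatchingFinset {V : Type*} (G : SimpleGraph V) (M : Finset (Sym2 V)) : Prop :=
  (↑M : Set (Sym2 V)) ⊆ G.edgeSet ∧ ∀ e ∈ M, ∀ f ∈ M, e ≠ f → ∀ x : V, x ∈ e → x ∉ f

/-- The gain of a walk `p` w.r.t. the matching `M` and the weights `w`:
`w(E(p) ∖ M) − w(E(p) ∩ M)`. -/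
def walkGain {V : Type*} [DecidableEq V] {G : SimpleGraph V} (w : Sym2 V → ℝ)
    (M : Finset (Sym2 V)) {u v : V} (p : G.Walk u v) : ℝ :=
  (∑ e ∈ p.edges.toFinset \ M, w e) - ∑ e ∈ p.edges.toFinset ∩ M, w e

/-- `p` is an `M`-augmenting walk for the weighted matching problem: it is a nontrivial
simple path or simple cycle whose edges alternate between `M` and `E ∖ M`, its gain is
positive, and if it is a (non-cycle) path then whenever it begins (resp. ends) with an
edge not in `M`, the corresponding endpoint is `M`-free. -/
def IsWAugPath {V : Type*} [DecidableEq V] (G : SimpleGraph V) (w : Sym2 V → ℝ)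
    (M : Finset (Sym2 V)) {u v : V} (p : G.Walk u v) : Prop :=
  0 < p.length ∧
  List.Chain' (fun e f => (e ∈ M ↔ f ∉ M)) p.edges ∧
  0 < walkGain w M p ∧
  ((∃ h : v = u, (p.copy rfl h).IsCycle ∧ Even p.length) ∨
   (p.IsPath ∧
     (∀ e, p.edges.head? = some e → e ∉ M → u ∉ coveredVerts M) ∧
     (∀ e, p.edges.getLast? = some e → e ∉ M → v ∉ coveredVerts M)))

/-- A weighted `M`-augmenting path in `G`, bundled with its endpoints. -/
structure WAugPath {V : Type*} [DecidableEq V] (G : SimpleGraph V) (w : Sym2 V → ℝ)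
    (M : Finset (Sym2 V)) where
  src : V
  tgt : V
  walk : G.Walk src tgt
  isAug : IsWAugPath G w M walk

/-- A bundled weighted augmenting path is `(M,[1,k])`-augmenting: it uses at most `k`
non-matching edges. -/
def WAugPath.IsK {V : Type*} [DecidableEq V] {G : SimpleGraph V} {w : Sym2 V → ℝ}
    {M : Finset (Sym2 V)} (p : WAugPath G w M) (k : ℕ) : Prop :=
  (p.walk.edges.toFinset \ M).card ≤ k

/-- Two bundled weighted augmenting paths are vertex-disjoint. -/
def WAugPath.VDisj {V : Type*} [DecidableEq V] {G : SimpleGraph V} {w : Sym2 V → ℝ}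
    {M M' : Finset (Sym2 V)} (p : WAugPath G w M) (q : WAugPath G w M') : Prop :=
  ∀ x : V, x ∈ p.walk.support → x ∉ q.walk.support

/-- The gain of a bundled weighted augmenting path. -/
def WAugPath.gain {V : Type*} [DecidableEq V] {G : SimpleGraph V} {w : Sym2 V → ℝ}
    {M : Finset (Sym2 V)} (p : WAugPath G w M) : ℝ :=
  walkGain w M p.walk

/-- The gain-index `γ_M(p) = ⌈log₂ gain_M(p)⌉` of a bundled weighted augmenting path. -/
noncomputable def WAugPath.gainIndex {V : Type*} [DecidableEq V] {G : SimpleGraph V} {w : Sym2 V → ℝ}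
    {M : Finset (Sym2 V)} (p : WAugPath G w M) : ℤ :=
  ⌈Real.logb 2 p.gain⌉

set_option linter.unusedSectionVars false
set_option linter.unusedVariables false
set_option linter.deprecated false
set_option linter.unnecessarySeqFocus false

instance covDec {V : Type*} [DecidableEq V] (M : Finset (Sym2 V)) :
    DecidablePred (· ∈ coveredVerts M) :=
  fun _ => decidable_of_iff (∃ e ∈ M, _ ∈ e) Iff.rfl

section cnt
variable {V : Type*} [DecidableEq V] (M : Finset (Sym2 V))

lemma count_inter (l : List (Sym2 V)) (hl : l.Nodup) :
    (l.toFinset ∩ M).card = l.countP (· ∈ M) := by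
  rw [← Finset.filter_mem_eq_inter]
  have : l.toFinset.filter (· ∈ M) = (l.filter (· ∈ M)).toFinset := by
    ext e; simp
  rw [this, List.toFinset_card_of_nodup (hl.filter _), List.countP_eq_length_filter]

lemma count_sdiff (l : List (Sym2 V)) (hl : l.Nodup) :
    (l.toFinset \ M).card = l.countP (· ∉ M) := by
  rw [Finset.sdiff_eq_filter]
  have : l.toFinset.filter (· ∉ M) = (l.filter (· ∉ M)).toFinset := by
    ext e; simp
  rw [this, List.toFinset_card_of_nodup (hl.filter _), List.countP_eq_length_filter]

lemma count_split (l : List (Sym2 V)) :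
    l.countP (· ∈ M) + l.countP (· ∉ M) = l.length := by
  have := List.length_eq_countP_add_countP (fun e => decide (e ∈ M)) (l := l)
  rw [this]
  congr 1
  apply List.countP_congr
  intro e _
  simp

end cnt

section lists
variable {V : Type*} [DecidableEq V] (M : Finset (Sym2 V))

/-- Count of `M`-edges in an alternating list, in terms of length and head. -/
lemma alt_countP : ∀ (l : List (Sym2 V)), l.Chain' (fun e f => (e ∈ M ↔ f ∉ M)) →
    ∀ e, l.head? = some e →
    l.countP (· ∈ M) = (l.length + if e ∈ M then 1 else 0) / 2 := by
  intro l
  induction l with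
  | nil => intro _ e he; simp at he
  | cons x t ih =>
    intro hc e he
    simp only [List.head?_cons, Option.some.injEq] at he
    obtain rfl : x = e := by simpa using he
    match t, hc with
    | [], _ => by_cases hx : x ∈ M <;> simp [List.countP_cons, hx]
    | y :: t', hc =>
      have h1 : (x ∈ M ↔ y ∉ M) := (List.isChain_cons_cons.mp hc).1
      have h2 := (List.isChain_cons_cons.mp hc).2
      have := ih h2 y rfl
      by_cases hx : x ∈ M <;> by_cases hy : y ∈ M <;>
        simp_all [List.countP_cons] <;> omega

/-- In a nonempty alternating list, head and last agree on membership iff length odd. -/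
lemma alt_parity : ∀ (l : List (Sym2 V)), l.Chain' (fun e f => (e ∈ M ↔ f ∉ M)) →
    ∀ e f, l.head? = some e → l.getLast? = some f →
    ((e ∈ M ↔ f ∈ M) ↔ Odd l.length) := by
  intro l
  induction l with
  | nil => intro _ e f he; simp at he
  | cons x t ih =>
    intro hc e f he hf
    simp only [List.head?_cons, Option.some.injEq] at he
    obtain rfl : x = e := by simpa using he
    match t, hc, hf with
    | [], _, hf =>
      simp only [List.getLast?_singleton, Option.some.injEq] at hf
      subst hf
      simp
    | y :: t', hc, hf =>
      have h1 : (x ∈ M ↔ y ∉ M) := (List.isChain_cons_cons.mp hc).1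
      have h2 := (List.isChain_cons_cons.mp hc).2
      have hlast : (y :: t').getLast? = some f := by
        rwa [List.getLast?_cons_cons] at hf
      have hI := ih h2 y f rfl hlast
      rw [Nat.odd_iff] at hI ⊢
      simp only [List.length_cons] at hI ⊢
      by_cases hy : y ∈ M <;> by_cases hf' : f ∈ M <;> by_cases hx : x ∈ M <;>
        simp_all <;> omega

end lists

section walks
variable {V : Type*} [DecidableEq V] {G : SimpleGraph V} (M : Finset (Sym2 V))

lemma head_mem_of_edges_head? : ∀ {u v : V} (p : G.Walk u v) (e : Sym2 V),
    p.edges.head? = some e → u ∈ e := by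
  intro u v p e he
  cases p with
  | nil => simp at he
  | cons h q =>
    simp only [SimpleGraph.Walk.edges_cons, List.head?_cons, Option.some.injEq] at he
    subst he
    exact Sym2.mem_mk_left _ _

lemma last_mem_of_edges_getLast? : ∀ {u v : V} (p : G.Walk u v) (e : Sym2 V),
    p.edges.getLast? = some e → v ∈ e := by
  intro u v p
  induction p with
  | nil => intro e he; simp at he
  | @cons a b c h q ih =>
    intro e he
    rcases hq : q.edges with _ | ⟨f, t⟩
    · have : q.length = 0 := by
        have := q.length_edges; rw [hq] at this; simpa using this.symm
      have hbc : b = c := SimpleGraph.Walk.eq_of_length_eq_zero this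
      subst hbc
      simp only [SimpleGraph.Walk.edges_cons, hq, List.getLast?_singleton,
        Option.some.injEq] at he
      subst he
      exact Sym2.mem_mk_right _ _
    · apply ih
      rw [SimpleGraph.Walk.edges_cons, hq, List.getLast?_cons_cons] at he
      rw [hq]
      exact he

/-- Structure of vertices on an alternating walk. -/
lemma alt_walk_cover : ∀ {u v : V} (p : G.Walk u v),
    p.edges.Chain' (fun e f => (e ∈ M ↔ f ∉ M)) → ∀ x ∈ p.support,
    (∃ e ∈ M, e ∈ p.edges ∧ x ∈ e) ∨
    (x = u ∧ ∀ e, p.edges.head? = some e → e ∉ M) ∨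
    (x = v ∧ ∀ e, p.edges.getLast? = some e → e ∉ M) := by
  intro u v p
  induction p with
  | nil =>
    intro _ x hx
    simp only [SimpleGraph.Walk.support_nil, List.mem_singleton] at hx
    right; left; exact ⟨hx, by simp⟩
  | @cons a b c h q ih =>
    intro hc x hx
    have e0def : (SimpleGraph.Walk.cons h q).edges = s(a, b) :: q.edges := rfl
    rw [SimpleGraph.Walk.support_cons, List.mem_cons] at hx
    rcases hx with hxa | hx
    · by_cases hm : s(a, b) ∈ M
      · exact Or.inl ⟨s(a, b), hm, by simp [e0def], hxa ▸ Sym2.mem_mk_left _ _⟩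
      · right; left
        refine ⟨hxa, fun e he => ?_⟩
        simp only [e0def, List.head?_cons, Option.some.injEq] at he
        subst he; exact hm
    · have hc' : q.edges.Chain' (fun e f => (e ∈ M ↔ f ∉ M)) := by
        rw [e0def] at hc; exact hc.tail
      rcases ih hc' x hx with ⟨e, hem, hee, hxe⟩ | ⟨hxb, hhead⟩ | ⟨hxc, hlast⟩
      · exact Or.inl ⟨e, hem, by simp [e0def, hee], hxe⟩
      · -- x = b, all of q's head edges (if any) are not in M
        rcases hq : q.edges with _ | ⟨f, t⟩
        · -- q is nil-like: b = c
          have : q.length = 0 := by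
            have := q.length_edges; rw [hq] at this; simpa using this.symm
          have hbc : b = c := SimpleGraph.Walk.eq_of_length_eq_zero this
          by_cases hm : s(a, b) ∈ M
          · exact Or.inl ⟨s(a, b), hm, by simp [e0def], hxb ▸ Sym2.mem_mk_right _ _⟩
          · right; right
            refine ⟨hxb.trans hbc, fun e he => ?_⟩
            simp only [e0def, hq, List.getLast?_singleton, Option.some.injEq] at he
            subst he; exact hm
        · have hfM : f ∉ M := hhead f (by rw [hq]; rfl)
          have hrel : (s(a, b) ∈ M ↔ f ∉ M) := by
            rw [e0def, hq] at hc; exact (List.isChain_cons_cons.mp hc).1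
          have hm : s(a, b) ∈ M := hrel.mpr hfM
          exact Or.inl ⟨s(a, b), hm, by simp [e0def], hxb ▸ Sym2.mem_mk_right _ _⟩
      · -- x = c
        rcases hq : q.edges with _ | ⟨f, t⟩
        · have : q.length = 0 := by
            have := q.length_edges; rw [hq] at this; simpa using this.symm
          have hbc : b = c := SimpleGraph.Walk.eq_of_length_eq_zero this
          by_cases hm : s(a, b) ∈ M
          · refine Or.inl ⟨s(a, b), hm, by simp [e0def], ?_⟩
            rw [hxc, ← hbc]; exact Sym2.mem_mk_right _ _
          · right; right
            refine ⟨hxc, fun e he => ?_⟩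
            simp only [e0def, hq, List.getLast?_singleton, Option.some.injEq] at he
            subst he; exact hm
        · right; right
          refine ⟨hxc, fun e he => ?_⟩
          apply hlast
          rw [e0def, hq, List.getLast?_cons_cons] at he
          rw [hq]; exact he

end walks

section aug
variable {V : Type*} [DecidableEq V] {G : SimpleGraph V} {w : Sym2 V → ℝ} {M : Finset (Sym2 V)}

lemma edges_ne_nil {u v : V} {p : G.Walk u v} (h : 0 < p.length) : p.edges ≠ [] := by
  intro hnil
  have := p.length_edges
  rw [hnil] at this
  simp at this
  omega

lemma exists_head {u v : V} {p : G.Walk u v} (h : 0 < p.length) :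
    ∃ e, p.edges.head? = some e := by
  rcases hq : p.edges with _ | ⟨e, t⟩
  · exact absurd hq (edges_ne_nil h)
  · exact ⟨e, rfl⟩

lemma exists_last {u v : V} {p : G.Walk u v} (h : 0 < p.length) :
    ∃ e, p.edges.getLast? = some e := by
  rcases hl : p.edges.getLast? with _ | e
  · exact absurd (List.getLast?_eq_none_iff.mp hl) (edges_ne_nil h)
  · exact ⟨e, rfl⟩

/-- On an augmenting walk, every covered vertex has its matching edge on the walk. -/
lemma aug_matched {u v : V} (p : G.Walk u v) (haug : IsWAugPath G w M p) :
    ∀ x ∈ p.support, x ∈ coveredVerts M → ∃ e ∈ M, e ∈ p.edges ∧ x ∈ e := by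
  obtain ⟨hlen, halt, _, hcases⟩ := haug
  intro x hx hcov
  obtain ⟨e0, he0⟩ := exists_head hlen
  obtain ⟨eL, heL⟩ := exists_last hlen
  have hpar := alt_parity M p.edges halt e0 eL he0 heL
  have hn : p.edges.length = p.length := p.length_edges
  rcases alt_walk_cover M p halt x hx with h | ⟨hxu, hhead⟩ | ⟨hxv, hlast⟩
  · exact h
  · have he0M : e0 ∉ M := hhead e0 he0
    rcases hcases with ⟨hvu, _, heven⟩ | ⟨_, hfu, _⟩
    · have : ¬ Odd p.edges.length := by
        rw [hn, Nat.not_odd_iff_even]; exact heven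
      have heLM : eL ∈ M := by tauto
      refine ⟨eL, heLM, List.mem_of_getLast? heL, ?_⟩
      rw [hxu, ← hvu]
      exact last_mem_of_edges_getLast? p eL heL
    · exact absurd (hxu ▸ hcov) (hfu e0 he0 he0M)
  · have heLM : eL ∉ M := hlast eL heL
    rcases hcases with ⟨hvu, _, heven⟩ | ⟨_, _, hfv⟩
    · have : ¬ Odd p.edges.length := by
        rw [hn, Nat.not_odd_iff_even]; exact heven
      have he0M : e0 ∈ M := by tauto
      refine ⟨e0, he0M, List.mem_of_mem_head? (by rw [he0]; rfl), ?_⟩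
      rw [hxv, hvu]
      exact head_mem_of_edges_head? p e0 he0
    · exact absurd (hxv ▸ hcov) (hfv eL heL heLM)

/-- On an alternating walk, every uncovered vertex is an endpoint. -/
lemma alt_free_endpoint {u v : V} (p : G.Walk u v)
    (halt : p.edges.Chain' (fun e f => (e ∈ M ↔ f ∉ M))) :
    ∀ x ∈ p.support, x ∉ coveredVerts M → x = u ∨ x = v := by
  intro x hx hfree
  rcases alt_walk_cover M p halt x hx with ⟨e, hem, _, hxe⟩ | ⟨hxu, _⟩ | ⟨hxv, _⟩
  · exact absurd ⟨e, hem, hxe⟩ hfree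
  · exact Or.inl hxu
  · exact Or.inr hxv

end aug

section ub
variable {V : Type*} [DecidableEq V] {G : SimpleGraph V} {w : Sym2 V → ℝ} {M : Finset (Sym2 V)}

lemma alt_countP_last (l : List (Sym2 V)) (h : l.Chain' (fun e f => (e ∈ M ↔ f ∉ M)))
    (f : Sym2 V) (hf : l.getLast? = some f) :
    l.countP (· ∈ M) = (l.length + if f ∈ M then 1 else 0) / 2 := by
  have hrev : l.reverse.Chain' (fun e f => (e ∈ M ↔ f ∉ M)) := by
    show List.IsChain _ l.reverse
    rw [List.isChain_reverse]
    exact List.IsChain.imp (fun a b hab => by tauto) h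
  have := alt_countP M l.reverse hrev f (by rwa [List.head?_reverse])
  rwa [List.countP_reverse, List.length_reverse] at this

/-- Every vertex of an alternating even cycle-like closed walk is covered. -/
lemma cycle_covered {u v : V} (p : G.Walk u v) (hlen : 0 < p.length)
    (halt : p.edges.Chain' (fun e f => (e ∈ M ↔ f ∉ M)))
    (hvu : v = u) (heven : Even p.length) :
    ∀ x ∈ p.support, x ∈ coveredVerts M := by
  intro x hx
  obtain ⟨e0, he0⟩ := exists_head hlen
  obtain ⟨eL, heL⟩ := exists_last hlen
  have hpar := alt_parity M p.edges halt e0 eL he0 heL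
  have hn : p.edges.length = p.length := p.length_edges
  have hnodd : ¬ Odd p.edges.length := by
    rw [hn, Nat.not_odd_iff_even]; exact heven
  rcases alt_walk_cover M p halt x hx with ⟨e, hem, _, hxe⟩ | ⟨hxu, hhead⟩ | ⟨hxv, hlast⟩
  · exact ⟨e, hem, hxe⟩
  · have he0M : e0 ∉ M := hhead e0 he0
    have heLM : eL ∈ M := by tauto
    exact ⟨eL, heLM, by rw [hxu, ← hvu]; exact last_mem_of_edges_getLast? p eL heL⟩
  · have heLM : eL ∉ M := hlast eL heL
    have he0M : e0 ∈ M := by tauto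
    exact ⟨e0, he0M, by rw [hxv, hvu]; exact head_mem_of_edges_head? p e0 he0⟩

/-- Main counting bound: matched edges plus free vertices of an augmenting walk. -/
lemma units_bound {u v : V} (p : G.Walk u v) (haug : IsWAugPath G w M p) {k : ℕ}
    (hk : (p.edges.toFinset \ M).card ≤ k) :
    (p.edges.toFinset ∩ M).card
      + (p.support.toFinset.filter (· ∉ coveredVerts M)).card ≤ k + 1 := by
  obtain ⟨hlen, halt, _, hcases⟩ := haug
  obtain ⟨e0, he0⟩ := exists_head hlen
  obtain ⟨eL, heL⟩ := exists_last hlen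
  have hpar := alt_parity M p.edges halt e0 eL he0 heL
  have hb0 := alt_countP M p.edges halt e0 he0
  have hbL := alt_countP_last p.edges halt eL heL
  have hsplit := count_split M p.edges
  rw [Nat.odd_iff] at hpar
  rcases hcases with ⟨hvu, hcyc, heven⟩ | ⟨hpath, _, _⟩
  · -- cycle case
    have hnodup : p.edges.Nodup := by
      have := hcyc.isCircuit.isTrail.edges_nodup
      rwa [SimpleGraph.Walk.edges_copy] at this
    have hF : (p.support.toFinset.filter (· ∉ coveredVerts M)) = ∅ := by
      rw [Finset.filter_eq_empty_iff]
      intro x hx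
      simp only [List.mem_toFinset] at hx
      simp only [Decidable.not_not]
      exact cycle_covered p hlen halt hvu heven x hx
    rw [hF, count_inter M p.edges hnodup]
    rw [count_sdiff M p.edges hnodup] at hk
    simp only [Finset.card_empty, add_zero]
    split_ifs at hb0 <;> omega
  · -- path case
    have hnodup : p.edges.Nodup := hpath.isTrail.edges_nodup
    have huv : u ≠ v := by
      intro h
      subst h
      have := (SimpleGraph.Walk.isPath_iff_eq_nil (p := p)).mp hpath
      subst this
      simp at hlen
    set F := p.support.toFinset.filter (· ∉ coveredVerts M) with hFdef
    have hFsub : F ⊆ {u, v} := by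
      intro x hx
      rw [hFdef, Finset.mem_filter, List.mem_toFinset] at hx
      rcases alt_free_endpoint p halt x hx.1 hx.2 with h | h <;> simp [h]
    have hcu : u ∈ F → e0 ∉ M := by
      intro hu he0M
      rw [hFdef, Finset.mem_filter] at hu
      exact hu.2 ⟨e0, he0M, head_mem_of_edges_head? p e0 he0⟩
    have hcv : v ∈ F → eL ∉ M := by
      intro hv heLM
      rw [hFdef, Finset.mem_filter] at hv
      exact hv.2 ⟨eL, heLM, last_mem_of_edges_getLast? p eL heL⟩
    rw [count_inter M p.edges hnodup]
    rw [count_sdiff M p.edges hnodup] at hk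
    by_cases hu : u ∈ F <;> by_cases hv : v ∈ F
    · have hFcard : F.card ≤ 2 := by
        calc F.card ≤ ({u, v} : Finset V).card := Finset.card_le_card hFsub
        _ = 2 := Finset.card_pair huv
      have h1 := hcu hu
      have h2 := hcv hv
      rw [if_neg h1] at hb0
      have hodd : p.edges.length % 2 = 1 := hpar.mp (by tauto)
      omega
    · have hFcard : F.card ≤ 1 := by
        have : F ⊆ {u} := by
          intro x hx
          have := hFsub hx
          simp only [Finset.mem_insert, Finset.mem_singleton] at this
          rcases this with h | h
          · simp [h]
          · exact absurd (h ▸ hx) hv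
        calc F.card ≤ ({u} : Finset V).card := Finset.card_le_card this
        _ = 1 := Finset.card_singleton u
      have h1 := hcu hu
      rw [if_neg h1] at hb0
      omega
    · have hFcard : F.card ≤ 1 := by
        have : F ⊆ {v} := by
          intro x hx
          have := hFsub hx
          simp only [Finset.mem_insert, Finset.mem_singleton] at this
          rcases this with h | h
          · exact absurd (h ▸ hx) hu
          · simp [h]
        calc F.card ≤ ({v} : Finset V).card := Finset.card_le_card this
        _ = 1 := Finset.card_singleton v
      have h2 := hcv hv
      rw [if_neg h2] at hbL
      omega
    · have hFcard : F.card = 0 := by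
        rw [Finset.card_eq_zero, Finset.eq_empty_iff_forall_notMem]
        intro x hx
        have := hFsub hx
        simp only [Finset.mem_insert, Finset.mem_singleton] at this
        rcases this with h | h
        · exact hu (h ▸ hx)
        · exact hv (h ▸ hx)
      split_ifs at hb0 <;> omega

end ub

section main
variable {V : Type*} [DecidableEq V] {G : SimpleGraph V}

lemma mem_support_of_mem_edges' {u v : V} (p : G.Walk u v) {e : Sym2 V}
    (he : e ∈ p.edges) {x : V} (hx : x ∈ e) : x ∈ p.support := by
  induction e using Sym2.ind with
  | _ a b =>
    rcases Sym2.mem_iff.mp hx with rfl | rfl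
    · exact p.fst_mem_support_of_mem_edges he
    · exact p.snd_mem_support_of_mem_edges he

lemma gain_le_two_mul {gp gq : ℝ} (hp : 0 < gp) (hq : 0 < gq)
    (h : ⌈Real.logb 2 gp⌉ ≤ ⌈Real.logb 2 gq⌉) : gp ≤ 2 * gq := by
  have h2 : (1 : ℝ) < 2 := one_lt_two
  calc gp = (2 : ℝ) ^ Real.logb 2 gp := (Real.rpow_logb two_pos (by norm_num) hp).symm
    _ ≤ (2 : ℝ) ^ ((⌈Real.logb 2 gp⌉ : ℝ)) :=
        (Real.rpow_le_rpow_left_iff h2).mpr (Int.le_ceil _)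
    _ ≤ (2 : ℝ) ^ ((⌈Real.logb 2 gq⌉ : ℝ)) :=
        (Real.rpow_le_rpow_left_iff h2).mpr (by exact_mod_cast h)
    _ ≤ (2 : ℝ) ^ (Real.logb 2 gq + 1) :=
        (Real.rpow_le_rpow_left_iff h2).mpr (le_of_lt (Int.ceil_lt_add_one _))
    _ = 2 * gq := by
        rw [Real.rpow_add two_pos, Real.rpow_logb two_pos (by norm_num) hq, Real.rpow_one]
        ring

end main


/-- Let `M` be a matching in a finite simple graph `G` with positive
edge weights `w` and let `k ≥ 1`.  Let `P = aug(M,k)` be a family of pairwise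
vertex-disjoint `(M,[1,k])`-augmenting paths of maximum total gain, and let `Q` be an
index-greedy family: pairwise vertex-disjoint `(M,[1,k])`-augmenting paths such that
every `(M,[1,k])`-augmenting path intersects some member of `Q` of gain-index at
least its own (this characterizes the maximal independent sets in the intersection
graph obtained by greedy processing in nonincreasing gain-index order).  Then
`gain(Q) ≥ (1/(2(k+1))) · gain(P)`. -/
theorem gain_of_index_greedy_ge
    {V : Type*} [Fintype V] [DecidableEq V] (G : SimpleGraph V)
    (w : Sym2 V → ℝ) (hw : ∀ e ∈ G.edgeSet, 0 < w e)
    (M : Finset (Sym2 V)) (hM : IsMatchingFinset G M)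
    (k : ℕ) (hk : 1 ≤ k)
    (m : ℕ) (P : Fin m → WAugPath G w M)
    (hPk : ∀ i, (P i).IsK k)
    (hPdisj : ∀ i j, i ≠ j → (P i).VDisj (P j))
    (hPopt : ∀ (m' : ℕ) (R : Fin m' → WAugPath G w M),
      (∀ i, (R i).IsK k) → (∀ i j, i ≠ j → (R i).VDisj (R j)) →
      ∑ i, (R i).gain ≤ ∑ i, (P i).gain)
    (mg : ℕ) (Q : Fin mg → WAugPath G w M)
    (hQk : ∀ j, (Q j).IsK k)
    (hQdisj : ∀ j j', j ≠ j' → (Q j).VDisj (Q j'))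
    (hQgreedy : ∀ q : WAugPath G w M, q.IsK k →
      ∃ j, ¬ q.VDisj (Q j) ∧ q.gainIndex ≤ (Q j).gainIndex) :
    (1 / (2 * ((k : ℝ) + 1))) * ∑ i, (P i).gain ≤ ∑ j, (Q j).gain := by
  classical
  have hgP : ∀ i, 0 < (P i).gain := fun i => (P i).isAug.2.2.1
  have hgQ : ∀ j, 0 < (Q j).gain := fun j => (Q j).isAug.2.2.1
  have hsel : ∀ i : Fin m, ∃ (j : Fin mg) (x : V), x ∈ (P i).walk.support ∧ x ∈ (Q j).walk.support ∧
      (P i).gainIndex ≤ (Q j).gainIndex := by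
    intro i
    obtain ⟨j, hnd, hle⟩ := hQgreedy (P i) (hPk i)
    unfold WAugPath.VDisj at hnd
    push_neg at hnd
    obtain ⟨x, hx1, hx2⟩ := hnd
    exact ⟨j, x, hx1, hx2, hle⟩
  choose f xc hxP hxQ hidx using hsel
  -- the matched edge of an intersection vertex, on Q (f i)
  have hmatched : ∀ i : Fin m, xc i ∈ coveredVerts M →
      ∃ e, e ∈ M ∧ e ∈ (Q (f i)).walk.edges ∧ xc i ∈ e := by
    intro i h
    obtain ⟨e, he, h2, h3⟩ := aug_matched (Q (f i)).walk (Q (f i)).isAug (xc i) (hxQ i) h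
    exact ⟨e, he, h2, h3⟩
  set g : Fin m → Sym2 V ⊕ V := fun i =>
    if h : xc i ∈ coveredVerts M then Sum.inl (Classical.choose (hmatched i h))
    else Sum.inr (xc i) with hgdef
  -- the chosen edge also lies on P i
  have hedgeP : ∀ (i : Fin m) (h : xc i ∈ coveredVerts M),
      Classical.choose (hmatched i h) ∈ (P i).walk.edges := by
    intro i h
    obtain ⟨heM, heQ, hxe⟩ := Classical.choose_spec (hmatched i h)
    obtain ⟨e', he'M, he'P, hxe'⟩ := aug_matched (P i).walk (P i).isAug (xc i) (hxP i) h
    have : e' = Classical.choose (hmatched i h) := by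
      by_contra hne
      exact hM.2 e' he'M _ heM hne (xc i) hxe' hxe
    rwa [← this]
  have fibcard : ∀ j, (Finset.univ.filter (fun i => f i = j)).card ≤ k + 1 := by
    intro j
    have hU : (((Q j).walk.edges.toFinset ∩ M).map ⟨Sum.inl, Sum.inl_injective⟩ ∪
        ((Q j).walk.support.toFinset.filter (· ∉ coveredVerts M)).map
          ⟨Sum.inr, Sum.inr_injective⟩ : Finset (Sym2 V ⊕ V)).card ≤ k + 1 := by
      calc _ ≤ (((Q j).walk.edges.toFinset ∩ M).map ⟨Sum.inl, Sum.inl_injective⟩).card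
              + (((Q j).walk.support.toFinset.filter (· ∉ coveredVerts M)).map
                  ⟨Sum.inr, Sum.inr_injective⟩ : Finset (Sym2 V ⊕ V)).card :=
            Finset.card_union_le _ _
        _ ≤ k + 1 := by
            rw [Finset.card_map, Finset.card_map]
            exact units_bound (Q j).walk (Q j).isAug (hQk j)
    refine le_trans (Finset.card_le_card_of_injOn g ?_ ?_) hU
    · intro i hi
      rw [Finset.mem_coe, Finset.mem_filter] at hi; rw [Finset.mem_coe]
      obtain ⟨-, hfi⟩ := hi
      subst hfi
      rw [hgdef]
      by_cases h : xc i ∈ coveredVerts M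
      · simp only [h, dif_pos]
        apply Finset.mem_union_left
        rw [Finset.mem_map]
        refine ⟨Classical.choose (hmatched i h), ?_, rfl⟩
        obtain ⟨heM, heQ, _⟩ := Classical.choose_spec (hmatched i h)
        rw [Finset.mem_inter, List.mem_toFinset]
        exact ⟨heQ, heM⟩
      · simp only [h, dif_neg, not_false_iff]
        apply Finset.mem_union_right
        rw [Finset.mem_map]
        refine ⟨xc i, ?_, rfl⟩
        rw [Finset.mem_filter, List.mem_toFinset]
        exact ⟨hxQ i, h⟩
    · intro i1 hi1 i2 hi2 heq
      by_contra hne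
      rw [hgdef] at heq
      simp only at heq
      by_cases h1 : xc i1 ∈ coveredVerts M <;> by_cases h2 : xc i2 ∈ coveredVerts M
      · rw [dif_pos h1, dif_pos h2] at heq
        have he : Classical.choose (hmatched i1 h1) = Classical.choose (hmatched i2 h2) :=
          Sum.inl_injective heq
        have hx1e : xc i1 ∈ Classical.choose (hmatched i1 h1) :=
          (Classical.choose_spec (hmatched i1 h1)).2.2
        have heP2 : Classical.choose (hmatched i1 h1) ∈ (P i2).walk.edges :=
          he ▸ hedgeP i2 h2
        have : xc i1 ∈ (P i2).walk.support :=
          mem_support_of_mem_edges' (P i2).walk heP2 hx1e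
        exact hPdisj i1 i2 hne (xc i1) (hxP i1) this
      · rw [dif_pos h1, dif_neg h2] at heq; exact Sum.inl_ne_inr heq
      · rw [dif_neg h1, dif_pos h2] at heq; exact Sum.inr_ne_inl heq
      · rw [dif_neg h1, dif_neg h2] at heq
        have : xc i1 = xc i2 := Sum.inr_injective heq
        exact hPdisj i1 i2 hne (xc i1) (hxP i1) (by rw [this]; exact hxP i2)
  have hfib : ∀ j, ∑ i ∈ Finset.univ.filter (fun i => f i = j), (P i).gain ≤
      ((k : ℝ) + 1) * (2 * (Q j).gain) := by
    intro j
    calc ∑ i ∈ Finset.univ.filter (fun i => f i = j), (P i).gain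
        ≤ ∑ _i ∈ Finset.univ.filter (fun i => f i = j), 2 * (Q j).gain := by
          apply Finset.sum_le_sum
          intro i hi
          rw [Finset.mem_filter] at hi
          refine gain_le_two_mul (hgP i) (hgQ j) ?_
          have h' := hidx i
          rw [hi.2] at h'
          exact h'
      _ = ((Finset.univ.filter (fun i => f i = j)).card : ℝ) * (2 * (Q j).gain) := by
          rw [Finset.sum_const, nsmul_eq_mul]
      _ ≤ ((k : ℝ) + 1) * (2 * (Q j).gain) := by
          apply mul_le_mul_of_nonneg_right _ (by linarith [hgQ j])
          exact_mod_cast fibcard j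
  have htotal : ∑ i, (P i).gain ≤ (2 * ((k : ℝ) + 1)) * ∑ j, (Q j).gain := by
    calc ∑ i, (P i).gain
        = ∑ j, ∑ i ∈ Finset.univ.filter (fun i => f i = j), (P i).gain :=
          (Finset.sum_fiberwise Finset.univ f (fun i => (P i).gain)).symm
      _ ≤ ∑ j, ((k : ℝ) + 1) * (2 * (Q j).gain) := Finset.sum_le_sum (fun j _ => hfib j)
      _ = (2 * ((k : ℝ) + 1)) * ∑ j, (Q j).gain := by
          rw [Finset.mul_sum]
          exact Finset.sum_congr rfl (fun j _ => by ring)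
  have hpos : (0 : ℝ) < 2 * ((k : ℝ) + 1) := by positivity
  rw [one_div, inv_mul_le_iff₀ hpos]
  calc ∑ i, (P i).gain ≤ (2 * ((k : ℝ) + 1)) * ∑ j, (Q j).gain := htotal
    _ = 2 * ((k : ℝ) + 1) * ∑ j, (Q j).gain := by ring
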